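/- arXiv:1909.05236 — 2 statements merged into one kernel-verified Lean document; each statement's English description precedes it below -/
import Mathlib

section
/- Let S be a finite nonempty type, let γ ∈ [0,1), let N ≥ 1, and let T_1,…,T_N : Ω → (ℕ → S) be independent, identically distributed measurable random trajectories on a probability space Ω. Define the empirical discounted occupancy d_D : S → ℝ by d_D(s)(ω) = (1/N)·Σ_{i=1}^N Σ_{t≥0} γ^t·1[T_i(ω)(t) = s], and the expected discounted occupancy d : S → ℝ by d(s) = Σ_{t≥0} γ^t·P(T_1(t) = s). Then for every ε > 0, the probability that (1-γ)·Σ_{s∈S} |d(s) - d_D(s)| ≥ ε is at most (2^{|S|} - 2)·exp(-N·ε²/2). -/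
set_option maxHeartbeats 1000000
set_option linter.unnecessarySeqFocus false

open MeasureTheory ProbabilityTheory
open Real

/-- Key scalar inequality behind Hoeffding's lemma for `[0,1]`-valued variables. -/
lemma hoeffding_scalar (m : ℝ) (hm0 : 0 ≤ m) (hm1 : m ≤ 1) (u : ℝ) :
    1 - m + m * Real.exp u ≤ Real.exp (m * u + u ^ 2 / 8) := by
  have hD : ∀ v : ℝ, 0 < 1 - m + m * Real.exp v := by
    intro v
    rcases eq_or_lt_of_le hm0 with h | h
    · simp [← h]
    · have := Real.exp_pos v; nlinarith
  set h : ℝ → ℝ := fun v => m * v + v ^ 2 / 8 - Real.log (1 - m + m * Real.exp v) with hh_def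
  set g : ℝ → ℝ := fun v => m + v / 4 - m * Real.exp v / (1 - m + m * Real.exp v) with hg_def
  have hDd : ∀ v : ℝ, HasDerivAt (fun v => 1 - m + m * Real.exp v) (m * Real.exp v) v := by
    intro v
    exact ((Real.hasDerivAt_exp v).const_mul m).const_add (1 - m)
  have hh : ∀ v : ℝ, HasDerivAt h (g v) v := by
    intro v
    have h1 : HasDerivAt (fun v : ℝ => m * v) m v := (hasDerivAt_id v).const_mul m |>.congr_deriv (by ring)
    have h2 : HasDerivAt (fun v : ℝ => v ^ 2 / 8) (v / 4) v := by
      have := (hasDerivAt_pow 2 v).div_const 8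
      refine this.congr_deriv ?_
      ring
    have h3 : HasDerivAt (fun v => Real.log (1 - m + m * Real.exp v))
        (m * Real.exp v / (1 - m + m * Real.exp v)) v := (hDd v).log (hD v).ne'
    exact ((h1.add h2).sub h3)
  have hg : ∀ v : ℝ, HasDerivAt g
      (1 / 4 - m * Real.exp v * (1 - m) / (1 - m + m * Real.exp v) ^ 2) v := by
    intro v
    have h2 : HasDerivAt (fun v : ℝ => m + v / 4) (1 / 4) v := by
      simpa using ((hasDerivAt_id v).div_const 4).const_add m
    have h3 : HasDerivAt (fun v => m * Real.exp v / (1 - m + m * Real.exp v))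
        ((m * Real.exp v * (1 - m + m * Real.exp v) -
          m * Real.exp v * (m * Real.exp v)) / (1 - m + m * Real.exp v) ^ 2) v :=
      ((Real.hasDerivAt_exp v).const_mul m).div (hDd v) (hD v).ne'
    have := h2.sub h3
    refine this.congr_deriv ?_
    ring
  have hg'_nonneg : ∀ v : ℝ,
      0 ≤ 1 / 4 - m * Real.exp v * (1 - m) / (1 - m + m * Real.exp v) ^ 2 := by
    intro v
    have hq : m * Real.exp v * (1 - m) / (1 - m + m * Real.exp v) ^ 2 ≤ 1 / 4 := by
      rw [div_le_iff₀ (pow_pos (hD v) 2)]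
      nlinarith [sq_nonneg (1 - m - m * Real.exp v)]
    linarith
  have hgmono : Monotone g :=
    monotone_of_deriv_nonneg (fun v => (hg v).differentiableAt)
      (fun v => by rw [(hg v).deriv]; exact hg'_nonneg v)
  have hg0 : g 0 = 0 := by
    simp [hg_def, Real.exp_zero]
  have hh0 : h 0 = 0 := by
    simp [hh_def, Real.exp_zero]
  have hhd : Differentiable ℝ h := fun v => (hh v).differentiableAt
  have hkey : 0 ≤ h u := by
    rcases le_total 0 u with hu | hu
    · have : MonotoneOn h (Set.Ici (0 : ℝ)) := by
        refine monotoneOn_of_deriv_nonneg (convex_Ici 0) hhd.continuous.continuousOn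
          hhd.differentiableOn ?_
        intro v hv
        rw [interior_Ici] at hv
        rw [(hh v).deriv]
        calc (0 : ℝ) = g 0 := hg0.symm
        _ ≤ g v := hgmono (le_of_lt hv)
      have := this (Set.self_mem_Ici) (Set.mem_Ici.2 hu) hu
      rwa [hh0] at this
    · have : AntitoneOn h (Set.Iic (0 : ℝ)) := by
        refine antitoneOn_of_deriv_nonpos (convex_Iic 0) hhd.continuous.continuousOn
          hhd.differentiableOn ?_
        intro v hv
        rw [interior_Iic] at hv
        rw [(hh v).deriv]
        calc g v ≤ g 0 := hgmono (le_of_lt hv)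
        _ = 0 := hg0
      have := this (Set.mem_Iic.2 hu) (Set.self_mem_Iic) hu
      rwa [hh0] at this
  have : Real.log (1 - m + m * Real.exp u) ≤ m * u + u ^ 2 / 8 := by
    simp only [hh_def] at hkey; linarith
  exact (Real.log_le_iff_le_exp (hD u)).1 this

/-- One-sided Hoeffding inequality for independent `[0,1]`-valued random variables. -/
lemma hoeffding_tail {Ω : Type*} [MeasurableSpace Ω] (μ : Measure Ω) [IsProbabilityMeasure μ]
    {N : ℕ} (Y : Fin N → Ω → ℝ) (hYmeas : ∀ i, Measurable (Y i))
    (hYindep : iIndepFun Y μ)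
    (hY0 : ∀ i ω, 0 ≤ Y i ω) (hY1 : ∀ i ω, Y i ω ≤ 1)
    (m : Fin N → ℝ) (hm : ∀ i, m i = ∫ ω, Y i ω ∂μ)
    (δ : ℝ) (hδ : 0 ≤ δ) :
    μ {ω | (N : ℝ) * δ ≤ ∑ i, (m i - Y i ω)} ≤
      ENNReal.ofReal (Real.exp (-2 * N * δ ^ 2)) := by
  classical
  set t : ℝ := 4 * δ with ht_def
  have ht : 0 ≤ t := by positivity
  set Z : Fin N → Ω → ℝ := fun i ω => m i - Y i ω with hZ_def
  have hZmeas : ∀ i, Measurable (Z i) := fun i => (measurable_const.sub (hYmeas i))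
  have hZindep : iIndepFun Z μ := by
    exact hYindep.comp (fun i x => m i - x) (fun i => measurable_const.sub measurable_id)
  have hYint : ∀ i, Integrable (Y i) μ := by
    intro i
    refine Integrable.mono' (integrable_const 1) (hYmeas i).aestronglyMeasurable ?_
    exact Filter.Eventually.of_forall fun ω => by
      rw [Real.norm_eq_abs, abs_le]; exact ⟨by linarith [hY0 i ω], hY1 i ω⟩
  have hm0 : ∀ i, 0 ≤ m i := by
    intro i; rw [hm i]
    exact integral_nonneg fun ω => hY0 i ω
  have hm1 : ∀ i, m i ≤ 1 := by
    intro i; rw [hm i]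
    calc ∫ ω, Y i ω ∂μ ≤ ∫ _ω, (1 : ℝ) ∂μ :=
      integral_mono (hYint i) (integrable_const 1) fun ω => hY1 i ω
    _ = 1 := by simp
  have hZint : ∀ i, Integrable (fun ω => Real.exp (t * Z i ω)) μ := by
    intro i
    refine Integrable.mono' (integrable_const (Real.exp (t * m i)))
      (((hZmeas i).const_mul t).exp).aestronglyMeasurable ?_
    refine Filter.Eventually.of_forall fun ω => ?_
    rw [Real.norm_eq_abs, abs_of_pos (Real.exp_pos _), Real.exp_le_exp]
    have : Z i ω ≤ m i := by simp [hZ_def]; linarith [hY0 i ω]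
    exact mul_le_mul_of_nonneg_left this ht
  -- bound on the individual mgf
  have hmgf : ∀ i, mgf (Z i) μ t ≤ Real.exp (t ^ 2 / 8) := by
    intro i
    have hconv : ∀ ω, Real.exp (t * Z i ω) ≤
        Real.exp (t * m i) * ((1 - Y i ω) + Y i ω * Real.exp (-t)) := by
      intro ω
      have h := convexOn_exp.2 (Set.mem_univ (0 : ℝ)) (Set.mem_univ (-t))
        (by linarith [hY1 i ω] : (0:ℝ) ≤ 1 - Y i ω) (hY0 i ω) (by ring)
      simp only [smul_eq_mul, mul_zero, Real.exp_zero, mul_one] at h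
      have h2 : Real.exp (-(t * Y i ω)) ≤ (1 - Y i ω) + Y i ω * Real.exp (-t) := by
        rw [show -(t * Y i ω) = 0 + Y i ω * -t by ring]; exact h
      have : Real.exp (t * Z i ω) = Real.exp (t * m i) * Real.exp (-(t * Y i ω)) := by
        rw [← Real.exp_add]; congr 1; simp [hZ_def]; ring
      rw [this]
      exact mul_le_mul_of_nonneg_left h2 (Real.exp_pos _).le
    have hint : ∫ ω, Real.exp (t * m i) * ((1 - Y i ω) + Y i ω * Real.exp (-t)) ∂μ
        = Real.exp (t * m i) * ((1 - m i) + m i * Real.exp (-t)) := by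
      rw [integral_const_mul]
      congr 1
      have hfe : (fun ω => (1 - Y i ω) + Y i ω * Real.exp (-t)) =
          fun ω => 1 + (Real.exp (-t) - 1) * Y i ω := by funext ω; ring
      rw [hfe, integral_add (integrable_const 1) ((hYint i).const_mul _),
        integral_const_mul, integral_const]
      simp only [measure_univ, probReal_univ, ENNReal.toReal_one, smul_eq_mul, one_mul, ← hm i]
      ring
    have : mgf (Z i) μ t ≤ Real.exp (t * m i) * ((1 - m i) + m i * Real.exp (-t)) := by
      rw [← hint]
      refine integral_mono (hZint i) ?_ hconv
      refine Integrable.const_mul ?_ _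
      exact ((integrable_const 1).sub (hYint i)).add ((hYint i).mul_const _)
    refine this.trans ?_
    have hs := hoeffding_scalar (m i) (hm0 i) (hm1 i) (-t)
    calc Real.exp (t * m i) * ((1 - m i) + m i * Real.exp (-t))
        ≤ Real.exp (t * m i) * Real.exp (m i * (-t) + (-t) ^ 2 / 8) := by
          have h' : 1 - m i + m i * Real.exp (-t) ≤ Real.exp (m i * (-t) + (-t) ^ 2 / 8) := hs
          nlinarith [Real.exp_pos (t * m i)]
    _ = Real.exp (t ^ 2 / 8) := by rw [← Real.exp_add]; ring_nf
  -- Chernoff bound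
  set X : Ω → ℝ := fun ω => ∑ i, Z i ω with hX_def
  have hXeq : (∑ i, Z i) = X := by funext ω; simp [hX_def]
  have hXmeas : Measurable X := Finset.measurable_sum _ (fun i _ => hZmeas i)
  have hsum_int : Integrable (fun ω => Real.exp (t * X ω)) μ := by
    refine Integrable.mono' (integrable_const (Real.exp (t * ∑ i, m i)))
      ((hXmeas.const_mul t).exp).aestronglyMeasurable ?_
    refine Filter.Eventually.of_forall fun ω => ?_
    rw [Real.norm_eq_abs, abs_of_pos (Real.exp_pos _), Real.exp_le_exp]
    refine mul_le_mul_of_nonneg_left ?_ ht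
    refine Finset.sum_le_sum fun i _ => ?_
    simp only [hZ_def]; linarith [hY0 i ω]
  have hcher := measure_ge_le_exp_mul_mgf (μ := μ) (X := X) ((N : ℝ) * δ) ht hsum_int
  have hmgfsum : mgf X μ t = ∏ i, mgf (Z i) μ t := by
    rw [← hXeq]; exact hZindep.mgf_sum hZmeas Finset.univ
  have hprod : ∏ i, mgf (Z i) μ t ≤ Real.exp (t ^ 2 / 8) ^ N := by
    calc ∏ i, mgf (Z i) μ t ≤ ∏ _i : Fin N, Real.exp (t ^ 2 / 8) :=
      Finset.prod_le_prod (fun i _ => mgf_nonneg) (fun i _ => hmgf i)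
    _ = Real.exp (t ^ 2 / 8) ^ N := by rw [Finset.prod_const, Finset.card_univ, Fintype.card_fin]
  have hfinal : (μ {ω | (N : ℝ) * δ ≤ ∑ i, (m i - Y i ω)}).toReal ≤
      Real.exp (-2 * N * δ ^ 2) := by
    have hset : {ω | (N : ℝ) * δ ≤ X ω} = {ω | (N : ℝ) * δ ≤ ∑ i, (m i - Y i ω)} := by
      ext ω; simp [hX_def, hZ_def]
    rw [← hset]
    refine hcher.trans ?_
    calc Real.exp (-t * ((N : ℝ) * δ)) * mgf X μ t
        ≤ Real.exp (-t * ((N : ℝ) * δ)) * Real.exp (t ^ 2 / 8) ^ N := by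
          refine mul_le_mul_of_nonneg_left ?_ (Real.exp_pos _).le
          rw [hmgfsum]; exact hprod
    _ = Real.exp (-2 * N * δ ^ 2) := by
      rw [← Real.exp_nat_mul, ← Real.exp_add]
      congr 1
      simp only [ht_def]; ring
  rw [← ENNReal.ofReal_toReal (measure_ne_top μ _)]
  exact ENNReal.ofReal_le_ofReal hfinal

/-- Splitting the `ℓ¹` norm of a mean-zero vector. -/
lemma half_l1 {S : Type*} [Fintype S] [DecidableEq S] (x : S → ℝ)
    (hx : ∑ s, x s = 0) :
    ∑ s ∈ Finset.univ.filter (fun s => 0 < x s), x s = (∑ s, |x s|) / 2 := by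
  classical
  have h1 : ∑ s ∈ Finset.univ.filter (fun s => 0 < x s), |x s|
      + ∑ s ∈ Finset.univ.filter (fun s => ¬ 0 < x s), |x s| = ∑ s, |x s| :=
    Finset.sum_filter_add_sum_filter_not _ _ _
  have h2 : ∑ s ∈ Finset.univ.filter (fun s => 0 < x s), x s
      + ∑ s ∈ Finset.univ.filter (fun s => ¬ 0 < x s), x s = ∑ s, x s :=
    Finset.sum_filter_add_sum_filter_not _ _ _
  have h3 : ∑ s ∈ Finset.univ.filter (fun s => 0 < x s), |x s|
      = ∑ s ∈ Finset.univ.filter (fun s => 0 < x s), x s := by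
    refine Finset.sum_congr rfl fun s hs => ?_
    exact abs_of_pos (Finset.mem_filter.1 hs).2
  have h4 : ∑ s ∈ Finset.univ.filter (fun s => ¬ 0 < x s), |x s|
      = - ∑ s ∈ Finset.univ.filter (fun s => ¬ 0 < x s), x s := by
    rw [← Finset.sum_neg_distrib]
    refine Finset.sum_congr rfl fun s hs => ?_
    exact abs_of_nonpos (le_of_not_gt (Finset.mem_filter.1 hs).2)
  rw [hx] at h2
  linarith

/-- Concentration of the empirical discounted occupancy of i.i.d.
trajectories around the expected discounted occupancy (Lemma 1 of the paper). -/
theorem empirical_discounted_occupancy_concentration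
    {S : Type*} [Fintype S] [Nonempty S] [DecidableEq S] [MeasurableSpace S]
    [MeasurableSingletonClass S]
    {Ω : Type*} [MeasurableSpace Ω] (μ : Measure Ω) [IsProbabilityMeasure μ]
    (γ : ℝ) (hγ0 : 0 ≤ γ) (hγ1 : γ < 1)
    (N : ℕ) (hN : 0 < N)
    (T : Fin N → Ω → (ℕ → S))
    (hmeas : ∀ i, Measurable (T i))
    (hindep : iIndepFun T μ)
    (hident : ∀ i, μ.map (T i) = μ.map (T ⟨0, hN⟩))
    (dD : S → Ω → ℝ)
    (hdD : ∀ s ω, dD s ω =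
      (1 / (N : ℝ)) * ∑ i : Fin N, ∑' t : ℕ, γ ^ t * (if T i ω t = s then (1 : ℝ) else 0))
    (d : S → ℝ)
    (hd : ∀ s, d s = ∑' t : ℕ, γ ^ t * (μ {ω | T ⟨0, hN⟩ ω t = s}).toReal) :
    ∀ ε > (0 : ℝ),
      μ {ω | ε ≤ (1 - γ) * ∑ s : S, |d s - dD s ω|} ≤
        ENNReal.ofReal ((2 ^ Fintype.card S - 2) * Real.exp (-((N : ℝ) * ε ^ 2) / 2)) := by
  intro ε hε
  classical
  have hγ' : (0 : ℝ) < 1 - γ := by linarith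
  have hNR : (0 : ℝ) < N := by exact_mod_cast hN
  have hgeo : Summable (fun t : ℕ => γ ^ t) := summable_geometric_of_lt_one hγ0 hγ1
  have hsummable : ∀ u : ℕ → ℝ, (∀ t, 0 ≤ u t) → (∀ t, u t ≤ γ ^ t) → Summable u :=
    fun u h0 h1 => Summable.of_nonneg_of_le h0 h1 hgeo
  have hind_nonneg : ∀ (c : Prop) [Decidable c], (0:ℝ) ≤ (if c then (1:ℝ) else 0) := by
    intro c _; split <;> norm_num
  have hind_le : ∀ (c : Prop) [Decidable c], (if c then (1:ℝ) else 0) ≤ 1 := by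
    intro c _; split <;> norm_num
  have hterm_nonneg : ∀ (t : ℕ) (c : Prop) [Decidable c],
      (0:ℝ) ≤ γ ^ t * (if c then (1:ℝ) else 0) := fun t c _ =>
    mul_nonneg (pow_nonneg hγ0 t) (hind_nonneg c)
  have hterm_le : ∀ (t : ℕ) (c : Prop) [Decidable c],
      γ ^ t * (if c then (1:ℝ) else 0) ≤ γ ^ t := fun t c _ =>
    mul_le_of_le_one_right (pow_nonneg hγ0 t) (hind_le c)
  -- the per-subset discounted occupancy functional on trajectories
  set T0 : Ω → (ℕ → S) := T ⟨0, hN⟩ with hT0_def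
  set f : Finset S → (ℕ → S) → ℝ :=
    fun A τ => ∑' t : ℕ, γ ^ t * (if τ t ∈ A then (1:ℝ) else 0) with hf_def
  have hf_summ : ∀ (A : Finset S) (τ : ℕ → S),
      Summable (fun t : ℕ => γ ^ t * (if τ t ∈ A then (1:ℝ) else 0)) :=
    fun A τ => hsummable _ (fun t => hterm_nonneg t _) (fun t => hterm_le t _)
  have hs_summ : ∀ (s : S) (τ : ℕ → S),
      Summable (fun t : ℕ => γ ^ t * (if τ t = s then (1:ℝ) else 0)) :=
    fun s τ => hsummable _ (fun t => hterm_nonneg t _) (fun t => hterm_le t _)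
  have hf_meas : ∀ A : Finset S, Measurable (f A) := by
    intro A
    have hpart : ∀ n : ℕ, Measurable
        (fun τ : ℕ → S => ∑ t ∈ Finset.range n, γ ^ t * (if τ t ∈ A then (1:ℝ) else 0)) := by
      intro n
      refine Finset.measurable_sum _ fun t _ => ?_
      refine Measurable.const_mul ?_ _
      exact Measurable.ite (measurable_pi_apply t A.measurableSet)
        measurable_const measurable_const
    refine measurable_of_tendsto_metrizable hpart ?_
    rw [tendsto_pi_nhds]
    intro τ
    exact (hf_summ A τ).hasSum.tendsto_sum_nat
  have hf_nonneg : ∀ A τ, 0 ≤ f A τ := fun A τ =>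
    tsum_nonneg fun t => hterm_nonneg t _
  have hf_le : ∀ A τ, f A τ ≤ (1 - γ)⁻¹ := by
    intro A τ
    calc f A τ ≤ ∑' t : ℕ, γ ^ t :=
      Summable.tsum_le_tsum (fun t => hterm_le t _) (hf_summ A τ) hgeo
    _ = (1 - γ)⁻¹ := tsum_geometric_of_lt_one hγ0 hγ1
  have hf_univ : ∀ τ, f Finset.univ τ = (1 - γ)⁻¹ := by
    intro τ
    rw [hf_def]
    simp only [Finset.mem_univ, if_true, mul_one]
    exact tsum_geometric_of_lt_one hγ0 hγ1
  -- swapping the finite sum over states with the time series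
  have hswap : ∀ (A : Finset S) (τ : ℕ → S),
      ∑ s ∈ A, (∑' t : ℕ, γ ^ t * (if τ t = s then (1:ℝ) else 0)) = f A τ := by
    intro A τ
    rw [hf_def, ← Summable.tsum_finsetSum (fun s _ => hs_summ s τ)]
    congr 1
    funext t
    rw [← Finset.mul_sum]
    congr 1
    rw [Finset.sum_ite_eq A (τ t) (fun _ => (1:ℝ))]
  have hdDA : ∀ (A : Finset S) (ω : Ω),
      ∑ s ∈ A, dD s ω = (1 / (N:ℝ)) * ∑ i, f A (T i ω) := by
    intro A ω
    simp only [hdD]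
    rw [← Finset.mul_sum]
    congr 1
    rw [Finset.sum_comm]
    exact Finset.sum_congr rfl fun i _ => hswap A (T i ω)
  -- measurability of the one-step fibers
  have hT0meas : Measurable T0 := hmeas _
  have hfib_meas : ∀ (t : ℕ) (s : S), MeasurableSet {ω | T0 ω t = s} := by
    intro t s
    exact (measurable_pi_apply t).comp hT0meas (measurableSet_singleton s)
  have hAfib_meas : ∀ (t : ℕ) (A : Finset S), MeasurableSet {ω | T0 ω t ∈ A} := by
    intro t A
    exact (measurable_pi_apply t).comp hT0meas A.measurableSet
  -- fiber additivity
  have hfib_sum : ∀ (t : ℕ) (A : Finset S),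
      (μ {ω | T0 ω t ∈ A}).toReal = ∑ s ∈ A, (μ {ω | T0 ω t = s}).toReal := by
    intro t A
    have hset : {ω | T0 ω t ∈ A} = ⋃ s ∈ A, {ω | T0 ω t = s} := by
      ext ω; simp
    rw [hset, measure_biUnion_finset ?_ (fun s _ => hfib_meas t s)]
    · exact ENNReal.toReal_sum fun s _ => measure_ne_top μ _
    · intro s _ s' _ hss'
      refine Set.disjoint_left.2 fun ω h1 h2 => hss' ?_
      rw [← h1, ← h2]
  have hfib_le_one : ∀ (t : ℕ) (A : Finset S), (μ {ω | T0 ω t ∈ A}).toReal ≤ 1 := by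
    intro t A
    rw [← ENNReal.toReal_one]
    exact ENNReal.toReal_mono ENNReal.one_ne_top prob_le_one
  have hd_summ : ∀ s : S, Summable (fun t : ℕ => γ ^ t * (μ {ω | T0 ω t = s}).toReal) := by
    intro s
    refine hsummable _ (fun t => mul_nonneg (pow_nonneg hγ0 t) ENNReal.toReal_nonneg) fun t => ?_
    have h1 : (μ {ω | T0 ω t = s}).toReal ≤ 1 := by
      have := hfib_le_one t {s}
      simpa using this
    exact mul_le_of_le_one_right (pow_nonneg hγ0 t) h1
  -- sum of d over a subset
  have hdA : ∀ A : Finset S,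
      ∑ s ∈ A, d s = ∑' t : ℕ, γ ^ t * (μ {ω | T0 ω t ∈ A}).toReal := by
    intro A
    simp only [hd, ← hT0_def]
    rw [← Summable.tsum_finsetSum (fun s _ => hd_summ s)]
    congr 1
    funext t
    rw [← Finset.mul_sum, hfib_sum t A]
  -- expectation of f A ∘ T i
  have hEY : ∀ (A : Finset S) (i : Fin N),
      ∫ ω, f A (T i ω) ∂μ = ∑ s ∈ A, d s := by
    intro A i
    have h1 : ∫ ω, f A (T i ω) ∂μ = ∫ τ, f A τ ∂(μ.map (T i)) :=
      (integral_map (hmeas i).aemeasurable (hf_meas A).aestronglyMeasurable).symm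
    have h2 : ∫ τ, f A τ ∂(μ.map T0) = ∫ ω, f A (T0 ω) ∂μ :=
      integral_map hT0meas.aemeasurable (hf_meas A).aestronglyMeasurable
    rw [h1, hident i, h2]
    -- now compute the integral over μ
    have hmeasF : ∀ t : ℕ, Measurable (fun ω => γ ^ t * (if T0 ω t ∈ A then (1:ℝ) else 0)) := by
      intro t
      exact Measurable.const_mul
        (Measurable.ite (hAfib_meas t A) measurable_const measurable_const) _
    have hlint : ∑' t : ℕ, ∫⁻ ω, ‖γ ^ t * (if T0 ω t ∈ A then (1:ℝ) else 0)‖₊ ∂μ ≠ ⊤ := by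
      have hb : ∀ t : ℕ, ∫⁻ ω, ‖γ ^ t * (if T0 ω t ∈ A then (1:ℝ) else 0)‖₊ ∂μ
          ≤ ENNReal.ofReal (γ ^ t) := by
        intro t
        calc ∫⁻ ω, ‖γ ^ t * (if T0 ω t ∈ A then (1:ℝ) else 0)‖₊ ∂μ
            ≤ ∫⁻ _ω, ENNReal.ofReal (γ ^ t) ∂μ := by
              refine lintegral_mono fun ω => ?_
              rw [← enorm_eq_nnnorm, Real.enorm_eq_ofReal_abs]
              refine ENNReal.ofReal_le_ofReal ?_
              rw [abs_of_nonneg (hterm_nonneg t _)]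
              exact hterm_le t _
        _ = ENNReal.ofReal (γ ^ t) := by simp
      refine ne_top_of_le_ne_top ?_ (ENNReal.tsum_le_tsum hb)
      rw [← ENNReal.ofReal_tsum_of_nonneg (fun t => pow_nonneg hγ0 t) hgeo]
      exact ENNReal.ofReal_ne_top
    have hint := integral_tsum (fun t => (hmeasF t).aestronglyMeasurable) hlint
    have hterm_int : ∀ t : ℕ,
        ∫ ω, γ ^ t * (if T0 ω t ∈ A then (1:ℝ) else 0) ∂μ
          = γ ^ t * (μ {ω | T0 ω t ∈ A}).toReal := by
      intro t
      rw [integral_const_mul]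
      congr 1
      have : (fun ω => if T0 ω t ∈ A then (1:ℝ) else 0)
          = Set.indicator {ω | T0 ω t ∈ A} (fun _ => (1:ℝ)) := by
        funext ω
        rw [Set.indicator_apply]
        rfl
      rw [this]
      exact integral_indicator_one (hAfib_meas t A)
    calc ∫ ω, f A (T0 ω) ∂μ
        = ∑' t : ℕ, ∫ ω, γ ^ t * (if T0 ω t ∈ A then (1:ℝ) else 0) ∂μ := hint
    _ = ∑' t : ℕ, γ ^ t * (μ {ω | T0 ω t ∈ A}).toReal := by
        congr 1; funext t; exact hterm_int t
    _ = ∑ s ∈ A, d s := (hdA A).symm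
  -- total masses
  have hsum_d : ∑ s : S, d s = (1 - γ)⁻¹ := by
    rw [hdA Finset.univ]
    have : ∀ t : ℕ, {ω | T0 ω t ∈ (Finset.univ : Finset S)} = Set.univ := by
      intro t; ext ω; simp
    calc ∑' t : ℕ, γ ^ t * (μ {ω | T0 ω t ∈ (Finset.univ : Finset S)}).toReal
        = ∑' t : ℕ, γ ^ t := by
          congr 1; funext t; rw [this t]; simp
    _ = (1 - γ)⁻¹ := tsum_geometric_of_lt_one hγ0 hγ1
  have hsum_dD : ∀ ω, ∑ s : S, dD s ω = (1 - γ)⁻¹ := by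
    intro ω
    rw [hdDA Finset.univ ω]
    have : ∑ i : Fin N, f Finset.univ (T i ω) = (N : ℝ) * (1 - γ)⁻¹ := by
      rw [Finset.sum_congr rfl fun i _ => hf_univ (T i ω)]
      simp [Finset.card_univ]
    rw [this]
    field_simp
  -- the family of "bad" events
  set EA : Finset S → Set Ω := fun A =>
    {ω | (N : ℝ) * (ε / 2) ≤
      ∑ i, ((1 - γ) * ∑ s ∈ A, d s - (1 - γ) * f A (T i ω))} with hEA_def
  set 𝒜 : Finset (Finset S) :=
    Finset.univ.filter (fun A : Finset S => A.Nonempty ∧ A ≠ Finset.univ) with h𝒜_def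
  -- inclusion of the deviation event into the union
  have hsubset : {ω | ε ≤ (1 - γ) * ∑ s : S, |d s - dD s ω|} ⊆ ⋃ A ∈ 𝒜, EA A := by
    intro ω hω
    simp only [Set.mem_setOf_eq] at hω
    set x : S → ℝ := fun s => d s - dD s ω with hx_def
    have hx0 : ∑ s, x s = 0 := by
      simp only [hx_def, Finset.sum_sub_distrib, hsum_d, hsum_dD ω, sub_self]
    set A : Finset S := Finset.univ.filter (fun s => 0 < x s) with hA_def
    have hhalf : ∑ s ∈ A, x s = (∑ s, |x s|) / 2 := half_l1 x hx0
    have habs_pos : 0 < ∑ s, |x s| := by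
      by_contra h
      push_neg at h
      have : (1 - γ) * ∑ s : S, |d s - dD s ω| ≤ 0 := by
        have : ∑ s : S, |d s - dD s ω| ≤ 0 := h
        nlinarith
      linarith
    have hApos : 0 < ∑ s ∈ A, x s := by rw [hhalf]; linarith
    have hAne : A.Nonempty := by
      rcases Finset.eq_empty_or_nonempty A with h | h
      · rw [h, Finset.sum_empty] at hApos; linarith
      · exact h
    have hAnu : A ≠ Finset.univ := by
      intro h
      rw [h, hx0] at hApos
      linarith
    have hA𝒜 : A ∈ 𝒜 := by
      rw [h𝒜_def, Finset.mem_filter]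
      exact ⟨Finset.mem_univ _, hAne, hAnu⟩
    refine Set.mem_biUnion hA𝒜 ?_
    rw [hEA_def]
    simp only [Set.mem_setOf_eq]
    have hfsum : ∑ i, f A (T i ω) = (N : ℝ) * ∑ s ∈ A, dD s ω := by
      rw [hdDA A ω]
      field_simp
    have hexp : ∑ i, ((1 - γ) * ∑ s ∈ A, d s - (1 - γ) * f A (T i ω))
        = (N : ℝ) * (1 - γ) * ∑ s ∈ A, x s := by
      rw [Finset.sum_sub_distrib, Finset.sum_const, ← Finset.mul_sum, hfsum]
      simp only [Finset.card_univ, Fintype.card_fin, nsmul_eq_mul]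
      simp only [hx_def]
      rw [Finset.sum_sub_distrib]
      ring
    rw [hexp, hhalf]
    have hεle : ε ≤ (1 - γ) * ∑ s, |x s| := by
      simpa only [hx_def] using hω
    calc (N : ℝ) * (ε / 2) ≤ (N : ℝ) * ((1 - γ) * ∑ s, |x s|) / 2 := by
          have := mul_le_mul_of_nonneg_left hεle (le_of_lt hNR)
          linarith
    _ = (N : ℝ) * (1 - γ) * ((∑ s, |x s|) / 2) := by ring
  -- Hoeffding bound for each event
  have hEAbound : ∀ A : Finset S,
      μ (EA A) ≤ ENNReal.ofReal (Real.exp (-((N : ℝ) * ε ^ 2) / 2)) := by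
    intro A
    set Y : Fin N → Ω → ℝ := fun i ω => (1 - γ) * f A (T i ω) with hY_def
    have hYmeas : ∀ i, Measurable (Y i) :=
      fun i => ((hf_meas A).comp (hmeas i)).const_mul _
    have hYindep : iIndepFun Y μ :=
      hindep.comp (fun i τ => (1 - γ) * f A τ) (fun i => (hf_meas A).const_mul _)
    have hY0 : ∀ i ω, 0 ≤ Y i ω := fun i ω => mul_nonneg hγ'.le (hf_nonneg A _)
    have hY1 : ∀ i ω, Y i ω ≤ 1 := by
      intro i ω
      calc Y i ω ≤ (1 - γ) * (1 - γ)⁻¹ :=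
        mul_le_mul_of_nonneg_left (hf_le A _) hγ'.le
      _ = 1 := mul_inv_cancel₀ hγ'.ne'
    have hm : ∀ i : Fin N, (1 - γ) * ∑ s ∈ A, d s = ∫ ω, Y i ω ∂μ := by
      intro i
      rw [hY_def]
      simp only
      rw [integral_const_mul, hEY A i]
    have hht := hoeffding_tail μ Y hYmeas hYindep hY0 hY1
      (fun _ => (1 - γ) * ∑ s ∈ A, d s) hm (ε / 2) (by linarith)
    have hsets : {ω | (N : ℝ) * (ε / 2) ≤ ∑ i, ((1 - γ) * ∑ s ∈ A, d s - Y i ω)} = EA A := by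
      rw [hEA_def]
    have hexp_eq : (-2 : ℝ) * N * (ε / 2) ^ 2 = -((N : ℝ) * ε ^ 2) / 2 := by ring
    rw [hsets, hexp_eq] at hht
    exact hht
  -- cardinality of the index set
  have hcard : 𝒜.card = 2 ^ Fintype.card S - 2 := by
    have h1 : 𝒜 = Finset.univ \ {∅, Finset.univ} := by
      rw [h𝒜_def]
      ext A
      simp only [Finset.mem_filter, Finset.mem_univ, true_and, Finset.mem_sdiff,
        Finset.mem_insert, Finset.mem_singleton, Finset.nonempty_iff_ne_empty]
      tauto
    rw [h1, Finset.card_sdiff_of_subset (by intro A _; exact Finset.mem_univ A)]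
    have h2 : ({∅, Finset.univ} : Finset (Finset S)).card = 2 := by
      rw [Finset.card_insert_of_notMem, Finset.card_singleton]
      simp only [Finset.mem_singleton]
      exact fun h => (Finset.univ_nonempty (α := S)).ne_empty h.symm
    rw [h2, Finset.card_univ, Fintype.card_finset]
  have h2le : 2 ≤ 2 ^ Fintype.card S := by
    calc (2 : ℕ) = 2 ^ 1 := (pow_one 2).symm
    _ ≤ 2 ^ Fintype.card S := Nat.pow_le_pow_right (by norm_num) Fintype.card_pos
  -- put everything together
  calc μ {ω | ε ≤ (1 - γ) * ∑ s : S, |d s - dD s ω|}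
      ≤ μ (⋃ A ∈ 𝒜, EA A) := measure_mono hsubset
  _ ≤ ∑ A ∈ 𝒜, μ (EA A) := measure_biUnion_finset_le 𝒜 EA
  _ ≤ ∑ _A ∈ 𝒜, ENNReal.ofReal (Real.exp (-((N : ℝ) * ε ^ 2) / 2)) :=
      Finset.sum_le_sum fun A _ => hEAbound A
  _ = (𝒜.card : ENNReal) * ENNReal.ofReal (Real.exp (-((N : ℝ) * ε ^ 2) / 2)) := by
      rw [Finset.sum_const, nsmul_eq_mul]
  _ ≤ ENNReal.ofReal ((2 ^ Fintype.card S - 2) * Real.exp (-((N : ℝ) * ε ^ 2) / 2)) := by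
      rw [← ENNReal.ofReal_natCast 𝒜.card, ← ENNReal.ofReal_mul (Nat.cast_nonneg _)]
      refine ENNReal.ofReal_le_ofReal ?_
      refine mul_le_mul_of_nonneg_right ?_ (Real.exp_pos _).le
      rw [hcard]
      push_cast [Nat.cast_sub h2le]
      norm_num
end

section
/- Let S be a finite nonempty type with |S| = K, let γ ∈ [0,1), let N ≥ 1, let δ' ∈ (0,1), and let T_1,…,T_N : Ω → (ℕ → S) be independent, identically distributed measurable random trajectories on a probability space Ω. Define the empirical discounted occupancy d_D(s)(ω) = (1/N)·Σ_{i=1}^N Σ_{t≥0} γ^t·1[T_i(ω)(t) = s] and the expected discounted occupancy d(s) = Σ_{t≥0} γ^t·P(T_1(t) = s). Then with probability at least 1 - δ', Σ_{s∈S} |d(s) - d_D(s)| ≤ (1/(1-γ))·√( (3K + 4·log(1/δ')) / (2N) ). -/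
set_option linter.unusedSectionVars false
set_option maxHeartbeats 1000000

open MeasureTheory ProbabilityTheory
open scoped ENNReal

section SPIAux
open Real

/-- Core two-point inequality for Hoeffding's lemma. -/
lemma spi_two_point {p : ℝ} (hp0 : 0 ≤ p) (hp1 : p ≤ 1) (u : ℝ) :
    p * exp (-(1 - p) * u) + (1 - p) * exp (p * u) ≤ exp (u ^ 2 / 8) := by
  rcases eq_or_lt_of_le hp0 with h0 | h0
  · simp [← h0]
    positivity
  rcases eq_or_lt_of_le hp1 with h1 | h1
  · simp [h1]
    positivity
  set q : ℝ := 1 - p with hq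
  have hq0 : 0 < q := by simp [hq]; linarith
  -- D, D', D''
  set D : ℝ → ℝ := fun u => p * exp (-q * u) + q * exp (p * u) with hD
  set D' : ℝ → ℝ := fun u => p * q * exp (p * u) - p * q * exp (-q * u) with hD'
  set D'' : ℝ → ℝ := fun u => p * (q * (q * exp (-q * u))) + q * (p * (p * exp (p * u))) with hD''
  have hDpos : ∀ x, 0 < D x := fun x => by positivity
  have hasD : ∀ x, HasDerivAt D (D' x) x := by
    intro x
    have h1 := (((hasDerivAt_id x).const_mul (-q)).exp.const_mul p)
    have h2 := (((hasDerivAt_id x).const_mul p).exp.const_mul q)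
    have h3 := h1.add h2
    refine h3.congr_deriv ?_
    simp [hD']; ring
  have hasD' : ∀ x, HasDerivAt D' (D'' x) x := by
    intro x
    have h1 := (((hasDerivAt_id x).const_mul p).exp.const_mul (p * q))
    have h2 := (((hasDerivAt_id x).const_mul (-q)).exp.const_mul (p * q))
    have h3 := h1.sub h2
    refine h3.congr_deriv ?_
    simp [hD'']; ring
  -- F and G
  set F : ℝ → ℝ := fun u => u ^ 2 / 8 - Real.log (D u) with hF
  set G : ℝ → ℝ := fun u => u / 4 - D' u / D u with hG
  have hasF : ∀ x, HasDerivAt F (G x) x := by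
    intro x
    have h1 : HasDerivAt (fun u : ℝ => u ^ 2 / 8) ((2 : ℕ) * x ^ 1 / 8) x :=
      (hasDerivAt_pow 2 x).div_const 8
    have h2 : HasDerivAt (fun u => Real.log (D u)) (D' x / D x) x :=
      (hasD x).log (hDpos x).ne'
    have := h1.sub h2
    refine this.congr_deriv ?_
    simp [hG]; ring
  have hasG : ∀ x, HasDerivAt G (1 / 4 - (D'' x * D x - D' x * D' x) / (D x) ^ 2) x := by
    intro x
    have h1 : HasDerivAt (fun u : ℝ => u / 4) (1 / 4) x := (hasDerivAt_id x).div_const 4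
    have h2 : HasDerivAt (fun u => D' u / D u) ((D'' x * D x - D' x * D' x) / (D x) ^ 2) x :=
      (hasD' x).div (hasD x) (hDpos x).ne'
    exact h1.sub h2
  have hG'nonneg : ∀ x, 0 ≤ 1 / 4 - (D'' x * D x - D' x * D' x) / (D x) ^ 2 := by
    intro x
    set a : ℝ := p * exp (-q * x) with ha
    set b : ℝ := q * exp (p * x) with hb
    have ha0 : 0 < a := by positivity
    have hb0 : 0 < b := by positivity
    have hkey : D'' x * D x - D' x * D' x = a * b := by
      simp only [hD'', hD', hD, ha, hb, hq]; ring
    have hDx : D x = a + b := rfl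
    rw [hkey, hDx, sub_nonneg, div_le_iff₀ (by positivity)]
    nlinarith [sq_nonneg (a - b)]
  -- G is monotone, G 0 = 0
  have hGdiff : Differentiable ℝ G := fun x => (hasG x).differentiableAt
  have hGmono : Monotone G := by
    apply monotone_of_deriv_nonneg hGdiff
    intro x
    rw [(hasG x).deriv]
    exact hG'nonneg x
  have hG0 : G 0 = 0 := by simp [hG, hD', hD]
  have hF0 : F 0 = 0 := by
    simp [hF, hD, hq]
  -- F u ≥ 0 for all u
  have hFnonneg : ∀ x, 0 ≤ F x := by
    intro x
    rcases le_or_gt 0 x with hx | hx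
    · have hmono : MonotoneOn F (Set.Ici 0) := by
        apply monotoneOn_of_deriv_nonneg (convex_Ici 0)
          (fun y _ => ((hasF y).differentiableAt).continuousAt.continuousWithinAt)
          (fun y _ => ((hasF y).differentiableAt).differentiableWithinAt)
        intro y hy
        rw [interior_Ici] at hy
        rw [(hasF y).deriv]
        have : G 0 ≤ G y := hGmono (le_of_lt hy)
        rw [hG0] at this; exact this
      have := hmono (Set.self_mem_Ici) (Set.mem_Ici.mpr hx) hx
      rw [hF0] at this; exact this
    · have hanti : AntitoneOn F (Set.Iic 0) := by
        apply antitoneOn_of_deriv_nonpos (convex_Iic 0)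
          (fun y _ => ((hasF y).differentiableAt).continuousAt.continuousWithinAt)
          (fun y _ => ((hasF y).differentiableAt).differentiableWithinAt)
        intro y hy
        rw [interior_Iic] at hy
        rw [(hasF y).deriv]
        have : G y ≤ G 0 := hGmono (le_of_lt hy)
        rw [hG0] at this; exact this
      have := hanti (Set.mem_Iic.mpr hx.le) (Set.self_mem_Iic) hx.le
      rw [hF0] at this; exact this
    -- conclude
  have hlog : Real.log (D u) ≤ u ^ 2 / 8 := by
    have := hFnonneg u
    simp only [hF] at this
    linarith
  have : D u ≤ exp (u ^ 2 / 8) := (Real.log_le_iff_le_exp (hDpos u)).mp hlog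
  calc p * exp (-(1 - p) * u) + (1 - p) * exp (p * u) = D u := by simp [hD, hq]
    _ ≤ exp (u ^ 2 / 8) := this

/-- Hoeffding's lemma: mgf bound for a mean-zero random variable in `[a, b]`. -/
lemma spi_mgf_le {Ω : Type*} [MeasurableSpace Ω] {μ : Measure Ω}
    [IsProbabilityMeasure μ] {W : Ω → ℝ} (hW : Measurable W)
    {a b : ℝ} (hbd : ∀ ω, W ω ∈ Set.Icc a b) (hmean : ∫ ω, W ω ∂μ = 0) (t : ℝ) :
    mgf W μ t ≤ exp (t ^ 2 * (b - a) ^ 2 / 8) := by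
  have hWint : Integrable W μ := by
    refine Integrable.mono' (integrable_const (|a| ⊔ |b|)) hW.aestronglyMeasurable
      (Filter.Eventually.of_forall fun ω => ?_)
    have h1 := (hbd ω).1; have h2 := (hbd ω).2
    rw [Real.norm_eq_abs, abs_le]
    constructor
    · have := neg_abs_le a; have := le_max_left |a| |b|; linarith
    · have := le_abs_self b; have := le_max_right |a| |b|; linarith
  have ha0 : a ≤ 0 := by
    have h := integral_mono (integrable_const a) hWint (fun ω => (hbd ω).1)
    rwa [hmean, integral_const, probReal_univ, one_smul] at h
  have hb0 : 0 ≤ b := by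
    have h := integral_mono hWint (integrable_const b) (fun ω => (hbd ω).2)
    rwa [hmean, integral_const, probReal_univ, one_smul] at h
  rcases eq_or_lt_of_le (ha0.trans hb0) with hab | hab
  · -- a = b = 0, W ≡ 0
    have ha : a = 0 := by linarith
    have hb : b = 0 := by linarith
    have hW0 : ∀ ω, W ω = 0 := fun ω =>
      le_antisymm (hb ▸ (hbd ω).2) (ha ▸ (hbd ω).1)
    have : mgf W μ t = 1 := by
      unfold mgf
      simp only [hW0, mul_zero, exp_zero]
      simp
    rw [this]
    exact one_le_exp (by positivity)
  -- main case a < b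
  set h : ℝ := b - a with hh
  have hhpos : 0 < h := by simp [hh]; linarith
  set L : Ω → ℝ := fun ω =>
    (b * exp (t * a) - a * exp (t * b)) / h + ((exp (t * b) - exp (t * a)) / h) * W ω with hL
  have hpt : ∀ ω, exp (t * W ω) ≤ L ω := by
    intro ω
    have h1 := (hbd ω).1; have h2 := (hbd ω).2
    have hθ0 : 0 ≤ (b - W ω) / h := div_nonneg (by linarith) hhpos.le
    have hθ'0 : 0 ≤ (W ω - a) / h := div_nonneg (by linarith) hhpos.le
    have hsum : (b - W ω) / h + (W ω - a) / h = 1 := by field_simp; rw [hh]; ring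
    have hcx := convexOn_exp.2 (Set.mem_univ (t * a)) (Set.mem_univ (t * b)) hθ0 hθ'0 hsum
    simp only [smul_eq_mul] at hcx
    have harg : (b - W ω) / h * (t * a) + (W ω - a) / h * (t * b) = t * W ω := by
      field_simp; ring
    rw [harg] at hcx
    calc exp (t * W ω) ≤ (b - W ω) / h * exp (t * a) + (W ω - a) / h * exp (t * b) := hcx
      _ = L ω := by simp only [hL]; field_simp; ring
  have hexp_int : Integrable (fun ω => exp (t * W ω)) μ := by
    refine Integrable.mono' (integrable_const (exp (|t| * (|a| ⊔ |b|))))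
      (hW.const_mul t).exp.aestronglyMeasurable (Filter.Eventually.of_forall fun ω => ?_)
    rw [Real.norm_eq_abs, abs_of_nonneg (exp_nonneg _), exp_le_exp]
    have h1 := (hbd ω).1; have h2 := (hbd ω).2
    have hWabs : |W ω| ≤ |a| ⊔ |b| := by
      rw [abs_le]
      constructor
      · have := neg_abs_le a; have := le_max_left |a| |b|; linarith
      · have := le_abs_self b; have := le_max_right |a| |b|; linarith
    calc t * W ω ≤ |t * W ω| := le_abs_self _
      _ = |t| * |W ω| := abs_mul _ _
      _ ≤ |t| * (|a| ⊔ |b|) := by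
          exact mul_le_mul_of_nonneg_left hWabs (abs_nonneg t)
  have hLint : Integrable L μ :=
    (integrable_const _).add (hWint.const_mul _)
  have hint : ∫ ω, L ω ∂μ = (b * exp (t * a) - a * exp (t * b)) / h := by
    simp only [hL]
    rw [integral_add (integrable_const _) (hWint.const_mul _), integral_const_mul, hmean,
      integral_const, probReal_univ, one_smul, mul_zero, add_zero]
  have hmgf : mgf W μ t ≤ (b * exp (t * a) - a * exp (t * b)) / h := by
    rw [← hint]
    exact integral_mono hexp_int hLint hpt
  -- apply two-point lemma with p = b/h, u = t*h
  have hp0 : 0 ≤ b / h := by positivity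
  have hp1 : b / h ≤ 1 := by
    rw [div_le_one hhpos]; simp [hh]; linarith
  have h2pt := spi_two_point hp0 hp1 (t * h)
  have e1 : -(1 - b / h) * (t * h) = t * a := by field_simp; ring
  have e2 : b / h * (t * h) = t * b := by field_simp
  have e3 : (t * h) ^ 2 / 8 = t ^ 2 * (b - a) ^ 2 / 8 := by rw [hh]; ring
  rw [e1, e2, e3] at h2pt
  refine hmgf.trans (le_trans (le_of_eq ?_) h2pt)
  field_simp
  ring

/-- Hoeffding tail bound for a sum of independent mean-zero bounded random variables. -/
lemma spi_tail {Ω : Type*} [MeasurableSpace Ω] {μ : Measure Ω} [IsProbabilityMeasure μ]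
    {N : ℕ} {W : Fin N → Ω → ℝ} (hWmeas : ∀ i, Measurable (W i))
    (hindep : iIndepFun W μ)
    {a b : ℝ} (hbd : ∀ i ω, W i ω ∈ Set.Icc a b) (hmean : ∀ i, ∫ ω, W i ω ∂μ = 0)
    {ε : ℝ} (hε : 0 ≤ ε) :
    (μ {ω | ε ≤ ∑ i, W i ω}).toReal ≤ exp (-(2 * ε ^ 2) / (N * (b - a) ^ 2)) := by
  have htriv : (μ {ω | ε ≤ ∑ i, W i ω}).toReal ≤ 1 := by
    calc (μ {ω | ε ≤ ∑ i, W i ω}).toReal ≤ (μ Set.univ).toReal :=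
          ENNReal.toReal_mono (measure_ne_top μ _) (measure_mono (Set.subset_univ _))
      _ = 1 := by rw [measure_univ, ENNReal.toReal_one]
  by_cases hd : (N : ℝ) * (b - a) ^ 2 = 0
  · rw [hd, div_zero, exp_zero]; exact htriv
  have hN : 0 < (N : ℝ) := by
    rcases Nat.eq_zero_or_pos N with h | h
    · exfalso; apply hd; simp [h]
    · exact_mod_cast h
  have hba : (b - a) ^ 2 ≠ 0 := fun h => hd (by rw [h, mul_zero])
  set t : ℝ := 4 * ε / ((N : ℝ) * (b - a) ^ 2) with ht
  have ht0 : 0 ≤ t := by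
    apply div_nonneg (by linarith)
    positivity
  -- integrability of exp (t * W i)
  have hbound : ∀ (i : Fin N) ω, |W i ω| ≤ |a| ⊔ |b| := by
    intro i ω
    have h1 := (hbd i ω).1; have h2 := (hbd i ω).2
    rw [abs_le]
    constructor
    · have := neg_abs_le a; have := le_max_left |a| |b|; linarith
    · have := le_abs_self b; have := le_max_right |a| |b|; linarith
  have hint : ∀ (s : ℝ) (i : Fin N), Integrable (fun ω => exp (s * W i ω)) μ := by
    intro s i
    refine Integrable.mono' (integrable_const (exp (|s| * (|a| ⊔ |b|))))
      ((hWmeas i).const_mul s).exp.aestronglyMeasurable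
      (Filter.Eventually.of_forall fun ω => ?_)
    rw [Real.norm_eq_abs, abs_of_nonneg (exp_nonneg _), exp_le_exp]
    calc s * W i ω ≤ |s * W i ω| := le_abs_self _
      _ = |s| * |W i ω| := abs_mul _ _
      _ ≤ |s| * (|a| ⊔ |b|) := mul_le_mul_of_nonneg_left (hbound i ω) (abs_nonneg s)
  have hfunext : (fun ω => ∑ i, W i ω) = ∑ i, W i := by
    ext ω; rw [Finset.sum_apply]
  have hmsum : Measurable (fun ω => ∑ i, W i ω) :=
    Finset.measurable_sum Finset.univ (fun i _ => hWmeas i)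
  -- integrability of exp (t * ∑ W i)
  have hintsum : Integrable (fun ω => exp (t * ∑ i, W i ω)) μ := by
    refine Integrable.mono' (integrable_const (exp (|t| * (N * (|a| ⊔ |b|)))))
      ((hmsum.const_mul t).exp.aestronglyMeasurable) (Filter.Eventually.of_forall fun ω => ?_)
    rw [Real.norm_eq_abs, abs_of_nonneg (exp_nonneg _), exp_le_exp]
    have hsum : |∑ i, W i ω| ≤ N * (|a| ⊔ |b|) := by
      calc |∑ i, W i ω| ≤ ∑ i : Fin N, |W i ω| := Finset.abs_sum_le_sum_abs _ _
        _ ≤ ∑ _i : Fin N, (|a| ⊔ |b|) := Finset.sum_le_sum fun i _ => hbound i _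
        _ = N * (|a| ⊔ |b|) := by rw [Finset.sum_const, Finset.card_univ,
            Fintype.card_fin, nsmul_eq_mul]
    calc t * ∑ i, W i ω ≤ |t * ∑ i, W i ω| := le_abs_self _
      _ = |t| * |∑ i, W i ω| := abs_mul _ _
      _ ≤ |t| * (N * (|a| ⊔ |b|)) := mul_le_mul_of_nonneg_left hsum (abs_nonneg t)
  -- Chernoff
  have hcher := measure_ge_le_exp_mul_mgf (X := fun ω => ∑ i, W i ω) (μ := μ) (t := t) ε ht0 hintsum
  have hmgfsum : mgf (fun ω => ∑ i, W i ω) μ t = ∏ i, mgf (W i) μ t := by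
    rw [hfunext]; exact hindep.mgf_sum hWmeas Finset.univ
  have hmgfle : ∏ i, mgf (W i) μ t ≤ exp ((N : ℝ) * (t ^ 2 * (b - a) ^ 2 / 8)) := by
    calc ∏ i, mgf (W i) μ t ≤ ∏ _i : Fin N, exp (t ^ 2 * (b - a) ^ 2 / 8) :=
          Finset.prod_le_prod (fun i _ => mgf_nonneg)
            (fun i _ => spi_mgf_le (hWmeas i) (hbd i) (hmean i) t)
      _ = exp (t ^ 2 * (b - a) ^ 2 / 8) ^ N := by
          rw [Finset.prod_const, Finset.card_univ, Fintype.card_fin]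
      _ = exp ((N : ℝ) * (t ^ 2 * (b - a) ^ 2 / 8)) := by rw [← Real.exp_nat_mul]
  calc (μ {ω | ε ≤ ∑ i, W i ω}).toReal
      ≤ exp (-t * ε) * mgf (fun ω => ∑ i, W i ω) μ t := hcher
    _ ≤ exp (-t * ε) * exp ((N : ℝ) * (t ^ 2 * (b - a) ^ 2 / 8)) := by
        rw [hmgfsum]
        exact mul_le_mul_of_nonneg_left hmgfle (exp_nonneg _)
    _ = exp (-t * ε + (N : ℝ) * (t ^ 2 * (b - a) ^ 2 / 8)) := (Real.exp_add _ _).symm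
    _ = exp (-(2 * ε ^ 2) / (N * (b - a) ^ 2)) := by
        congr 1
        rw [ht]
        field_simp
        ring

/-- Discounted occupancy of a single trajectory. -/
noncomputable def spiφ {S : Type*} [DecidableEq S] (γ : ℝ) (s : S) (f : ℕ → S) : ℝ :=
  ∑' t : ℕ, γ ^ t * (if f t = s then (1 : ℝ) else 0)

section SPIOcc

variable {S : Type*} [Fintype S] [DecidableEq S] [MeasurableSpace S]
  [MeasurableSingletonClass S]

variable {γ : ℝ}

lemma spi_summable (hγ0 : 0 ≤ γ) (hγ1 : γ < 1) (s : S) (f : ℕ → S) :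
    Summable (fun t : ℕ => γ ^ t * (if f t = s then (1 : ℝ) else 0)) := by
  refine Summable.of_nonneg_of_le (fun t => ?_) (fun t => ?_)
    (summable_geometric_of_lt_one hγ0 hγ1)
  · exact mul_nonneg (pow_nonneg hγ0 t) (by split <;> norm_num)
  · calc γ ^ t * (if f t = s then (1:ℝ) else 0) ≤ γ ^ t * 1 := by
          apply mul_le_mul_of_nonneg_left _ (by positivity)
          split <;> norm_num
      _ = γ ^ t := mul_one _

lemma spiφ_nonneg (hγ0 : 0 ≤ γ) (s : S) (f : ℕ → S) : 0 ≤ spiφ γ s f :=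
  tsum_nonneg fun t => mul_nonneg (pow_nonneg hγ0 t) (by split <;> norm_num)

lemma spiφ_total (hγ0 : 0 ≤ γ) (hγ1 : γ < 1) (f : ℕ → S) : ∑ s : S, spiφ γ s f = (1 - γ)⁻¹ := by
  unfold spiφ
  rw [← Summable.tsum_finsetSum (fun s _ => spi_summable hγ0 hγ1 s f)]
  have : ∀ t : ℕ, (∑ s : S, γ ^ t * (if f t = s then (1:ℝ) else 0)) = γ ^ t := by
    intro t
    rw [← Finset.mul_sum]
    rw [Finset.sum_ite_eq Finset.univ (f t) (fun _ => (1 : ℝ))]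
    simp
  rw [tsum_congr this]
  exact tsum_geometric_of_lt_one hγ0 hγ1

lemma spiφ_sum_le (hγ0 : 0 ≤ γ) (hγ1 : γ < 1) (A : Finset S) (f : ℕ → S) :
    ∑ s ∈ A, spiφ γ s f ≤ (1 - γ)⁻¹ := by
  rw [← spiφ_total hγ0 hγ1 f]
  exact Finset.sum_le_sum_of_subset_of_nonneg (Finset.subset_univ A)
    (fun s _ _ => spiφ_nonneg hγ0 s f)

lemma spiφ_meas (hγ0 : 0 ≤ γ) (hγ1 : γ < 1) (s : S) : Measurable (spiφ γ s : (ℕ → S) → ℝ) := by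
  have hterm : ∀ t : ℕ, Measurable (fun f : ℕ → S => γ ^ t * (if f t = s then (1:ℝ) else 0)) := by
    intro t
    apply Measurable.const_mul
    have hmt : Measurable (fun f : ℕ → S => f t) := measurable_pi_apply t
    have hset : MeasurableSet {f : ℕ → S | f t = s} := hmt (measurableSet_singleton s)
    exact Measurable.ite hset measurable_const measurable_const
  apply measurable_of_tendsto_metrizable
    (f := fun n (f : ℕ → S) => ∑ t ∈ Finset.range n, γ ^ t * (if f t = s then (1:ℝ) else 0))
  · exact fun n => Finset.measurable_sum _ (fun t _ => hterm t)
  · rw [tendsto_pi_nhds]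
    intro f
    exact (spi_summable hγ0 hγ1 s f).hasSum.tendsto_sum_nat

end SPIOcc

end SPIAux

open Real

/-- High-probability form of the concentration lemma: with probability at
least `1 - δ'`, the L1 deviation between the expected and empirical discounted occupancies
is at most `(1/(1-γ))·√((3K + 4·log(1/δ'))/(2N))`. -/
theorem discounted_occupancy_high_probability_bound
    {S : Type*} [Fintype S] [Nonempty S] [DecidableEq S] [MeasurableSpace S]
    [MeasurableSingletonClass S]
    {Ω : Type*} [MeasurableSpace Ω] (μ : Measure Ω) [IsProbabilityMeasure μ]
    (γ : ℝ) (hγ0 : 0 ≤ γ) (hγ1 : γ < 1)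
    (N : ℕ) (hN : 0 < N)
    (δ' : ℝ) (hδ0 : 0 < δ') (hδ1 : δ' < 1)
    (T : Fin N → Ω → (ℕ → S))
    (hmeas : ∀ i, Measurable (T i))
    (hindep : iIndepFun T μ)
    (hident : ∀ i, μ.map (T i) = μ.map (T ⟨0, hN⟩))
    (dD : S → Ω → ℝ)
    (hdD : ∀ s ω, dD s ω =
      (1 / (N : ℝ)) * ∑ i : Fin N, ∑' t : ℕ, γ ^ t * (if T i ω t = s then (1 : ℝ) else 0))
    (d : S → ℝ)
    (hd : ∀ s, d s = ∑' t : ℕ, γ ^ t * (μ {ω | T ⟨0, hN⟩ ω t = s}).toReal) :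
    ENNReal.ofReal (1 - δ') ≤
      μ {ω | ∑ s : S, |d s - dD s ω| ≤
        (1 / (1 - γ)) *
          Real.sqrt ((3 * (Fintype.card S : ℝ) + 4 * Real.log (1 / δ')) / (2 * (N : ℝ)))} := by
  have hγ : (0 : ℝ) < 1 - γ := by linarith
  set c : ℝ := (1 - γ)⁻¹ with hc
  have hcpos : 0 < c := inv_pos.mpr hγ
  set K : ℕ := Fintype.card S with hK
  have hK1 : 1 ≤ K := Fintype.card_pos
  have hNpos : (0 : ℝ) < N := by exact_mod_cast hN
  set L : ℝ := Real.log (1 / δ') with hL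
  have hLpos : 0 < L := Real.log_pos (by rw [lt_div_iff₀ hδ0]; linarith)
  set R : ℝ := (3 * (K : ℝ) + 4 * L) / (2 * (N : ℝ)) with hR
  have hRpos : 0 < R := by
    apply div_pos
    · have : (1 : ℝ) ≤ (K : ℝ) := by exact_mod_cast hK1
      nlinarith
    · positivity
  set ε : ℝ := (1 / (1 - γ)) * Real.sqrt R with hε
  have hεc : ε = c * Real.sqrt R := by rw [hε, hc, one_div]
  have hεpos : 0 < ε := by
    rw [hεc]; exact mul_pos hcpos (Real.sqrt_pos.mpr hRpos)
  have hεsq : ε ^ 2 = c ^ 2 * R := by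
    rw [hεc, mul_pow, Real.sq_sqrt hRpos.le]
  -- dD in terms of spiφ
  have hdDφ : ∀ s ω, dD s ω = (1 / (N : ℝ)) * ∑ i : Fin N, spiφ γ s (T i ω) := fun s ω => hdD s ω
  -- integrability of spiφ s ∘ T i
  have hφb : ∀ (s : S) (f : ℕ → S), spiφ γ s f ≤ c := by
    intro s f
    have := spiφ_sum_le hγ0 hγ1 {s} f
    simpa using this
  have hφmeasT : ∀ (i : Fin N) (s : S), Measurable (fun ω => spiφ γ s (T i ω)) :=
    fun i s => (spiφ_meas hγ0 hγ1 s).comp (hmeas i)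
  have hφint : ∀ (i : Fin N) (s : S), Integrable (fun ω => spiφ γ s (T i ω)) μ := by
    intro i s
    refine Integrable.mono' (integrable_const c) (hφmeasT i s).aestronglyMeasurable
      (Filter.Eventually.of_forall fun ω => ?_)
    rw [Real.norm_eq_abs, abs_of_nonneg (spiφ_nonneg hγ0 s _)]
    exact hφb s _
  -- the mean identity: ∫ spiφ s (T i ω) = d s
  have hmean0 : ∀ s : S, ∫ ω, spiφ γ s (T ⟨0, hN⟩ ω) ∂μ = d s := by
    intro s
    rw [hd s]
    have hFint : ∀ t : ℕ, Integrable
        (fun ω => γ ^ t * (if T ⟨0, hN⟩ ω t = s then (1:ℝ) else 0)) μ := by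
      intro t
      have hmset : MeasurableSet {ω | T ⟨0, hN⟩ ω t = s} := by
        have hmt : Measurable (fun ω => T ⟨0, hN⟩ ω t) :=
          (measurable_pi_apply t).comp (hmeas ⟨0, hN⟩)
        exact hmt (measurableSet_singleton s)
      refine Integrable.mono' (integrable_const (γ ^ t))
        ((Measurable.ite hmset measurable_const measurable_const).const_mul _).aestronglyMeasurable
        (Filter.Eventually.of_forall fun ω => ?_)
      rw [Real.norm_eq_abs, abs_mul, abs_of_nonneg (pow_nonneg hγ0 t)]
      have : |if T ⟨0, hN⟩ ω t = s then (1:ℝ) else 0| ≤ 1 := by split <;> norm_num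
      calc γ ^ t * |if T ⟨0, hN⟩ ω t = s then (1:ℝ) else 0| ≤ γ ^ t * 1 :=
            mul_le_mul_of_nonneg_left this (pow_nonneg hγ0 t)
        _ = γ ^ t := mul_one _
    have hFsum : Summable (fun t : ℕ =>
        ∫ ω, ‖γ ^ t * (if T ⟨0, hN⟩ ω t = s then (1:ℝ) else 0)‖ ∂μ) := by
      refine Summable.of_nonneg_of_le (fun t => integral_nonneg fun ω => norm_nonneg _)
        (fun t => ?_) (summable_geometric_of_lt_one hγ0 hγ1)
      have h1 : ∀ ω, ‖γ ^ t * (if T ⟨0, hN⟩ ω t = s then (1:ℝ) else 0)‖ ≤ γ ^ t := by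
        intro ω
        rw [Real.norm_eq_abs, abs_mul, abs_of_nonneg (pow_nonneg hγ0 t)]
        have : |if T ⟨0, hN⟩ ω t = s then (1:ℝ) else 0| ≤ 1 := by split <;> norm_num
        calc γ ^ t * |if T ⟨0, hN⟩ ω t = s then (1:ℝ) else 0| ≤ γ ^ t * 1 :=
              mul_le_mul_of_nonneg_left this (pow_nonneg hγ0 t)
          _ = γ ^ t := mul_one _
      calc (∫ ω, ‖γ ^ t * (if T ⟨0, hN⟩ ω t = s then (1:ℝ) else 0)‖ ∂μ)
          ≤ ∫ _ω, γ ^ t ∂μ := integral_mono (hFint t).norm (integrable_const _) h1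
        _ = γ ^ t := by rw [integral_const, probReal_univ, one_smul]
    have hswap := integral_tsum_of_summable_integral_norm hFint hFsum
    unfold spiφ
    rw [← hswap]
    congr 1
    ext t
    have hmset : MeasurableSet {ω | T ⟨0, hN⟩ ω t = s} := by
      have hmt : Measurable (fun ω => T ⟨0, hN⟩ ω t) :=
        (measurable_pi_apply t).comp (hmeas ⟨0, hN⟩)
      exact hmt (measurableSet_singleton s)
    rw [integral_const_mul]
    congr 1
    have hind : (fun ω => if T ⟨0, hN⟩ ω t = s then (1:ℝ) else 0) =
        {ω | T ⟨0, hN⟩ ω t = s}.indicator (fun _ => (1:ℝ)) := by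
      ext ω
      by_cases h : T ⟨0, hN⟩ ω t = s <;> simp [Set.indicator_apply, Set.mem_setOf_eq, h]
    rw [hind, integral_indicator_const (1:ℝ) hmset, smul_eq_mul, mul_one, measureReal_def]
  have hmeani : ∀ (i : Fin N) (s : S), ∫ ω, spiφ γ s (T i ω) ∂μ = d s := by
    intro i s
    have h1 : ∫ ω, spiφ γ s (T i ω) ∂μ = ∫ f, spiφ γ s f ∂(μ.map (T i)) :=
      (integral_map (hmeas i).aemeasurable (spiφ_meas hγ0 hγ1 s).aestronglyMeasurable).symm
    have h2 : ∫ f, spiφ γ s f ∂(μ.map (T ⟨0, hN⟩)) = ∫ ω, spiφ γ s (T ⟨0, hN⟩ ω) ∂μ :=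
      integral_map (hmeas _).aemeasurable (spiφ_meas hγ0 hγ1 s).aestronglyMeasurable
    rw [h1, hident i, h2, hmean0 s]
  -- total sums
  have hdtotal : ∑ s : S, d s = c := by
    calc ∑ s : S, d s = ∑ s : S, ∫ ω, spiφ γ s (T ⟨0, hN⟩ ω) ∂μ :=
          Finset.sum_congr rfl (fun s _ => (hmean0 s).symm)
      _ = ∫ ω, ∑ s : S, spiφ γ s (T ⟨0, hN⟩ ω) ∂μ :=
          (integral_finset_sum _ (fun s _ => hφint ⟨0, hN⟩ s)).symm
      _ = ∫ _ω, c ∂μ :=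
          integral_congr_ae (Filter.Eventually.of_forall fun ω => spiφ_total hγ0 hγ1 _)
      _ = c := by rw [integral_const, probReal_univ, one_smul]
  have hdDtotal : ∀ ω, ∑ s : S, dD s ω = c := by
    intro ω
    simp only [hdDφ]
    rw [← Finset.mul_sum, Finset.sum_comm]
    rw [Finset.sum_congr rfl (fun i _ => spiφ_total hγ0 hγ1 (T i ω))]
    rw [Finset.sum_const, Finset.card_univ, Fintype.card_fin, nsmul_eq_mul]
    rw [hc]
    field_simp
  -- per-subset events
  have hkey : ∀ A : Finset S,
      μ {ω | ε / 2 ≤ ∑ s ∈ A, (d s - dD s ω)} ≤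
        ENNReal.ofReal (Real.exp (-(3 * (K : ℝ) + 4 * L) / 4)) := by
    intro A
    set m : ℝ := ∑ s ∈ A, d s with hm
    set W : Fin N → Ω → ℝ := fun i ω => m - ∑ s ∈ A, spiφ γ s (T i ω) with hW
    have hWmeas : ∀ i, Measurable (W i) := by
      intro i
      exact measurable_const.sub (Finset.measurable_sum _ (fun s _ => hφmeasT i s))
    have hWindep : iIndepFun W μ := by
      have hg : Measurable (fun f : ℕ → S => m - ∑ s ∈ A, spiφ γ s f) :=
        measurable_const.sub (Finset.measurable_sum _ (fun s _ => spiφ_meas hγ0 hγ1 s))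
      exact hindep.comp (fun _ => fun f => m - ∑ s ∈ A, spiφ γ s f) (fun _ => hg)
    have hWbd : ∀ i ω, W i ω ∈ Set.Icc (m - c) m := by
      intro i ω
      constructor
      · have : ∑ s ∈ A, spiφ γ s (T i ω) ≤ c :=
          spiφ_sum_le hγ0 hγ1 A (T i ω)
        simp only [hW]; linarith
      · have : 0 ≤ ∑ s ∈ A, spiφ γ s (T i ω) :=
          Finset.sum_nonneg fun s _ => spiφ_nonneg hγ0 s _
        simp only [hW]; linarith
    have hWmean : ∀ i, ∫ ω, W i ω ∂μ = 0 := by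
      intro i
      simp only [hW]
      rw [integral_sub (integrable_const m) (integrable_finset_sum _ (fun s _ => hφint i s)),
        integral_const, probReal_univ, one_smul,
        integral_finset_sum _ (fun s _ => hφint i s),
        Finset.sum_congr rfl (fun s _ => hmeani i s), ← hm, sub_self]
    have htail := spi_tail hWmeas hWindep hWbd hWmean
      (ε := (N : ℝ) * (ε / 2)) (by positivity)
    -- set equality
    have hseteq : {ω | (N : ℝ) * (ε / 2) ≤ ∑ i, W i ω} =
        {ω | ε / 2 ≤ ∑ s ∈ A, (d s - dD s ω)} := by
      ext ω
      simp only [Set.mem_setOf_eq]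
      have hSig : ∑ s ∈ A, (d s - dD s ω) = (1 / (N : ℝ)) * ∑ i, W i ω := by
        simp only [hW]
        rw [Finset.sum_sub_distrib]
        rw [Finset.sum_congr rfl (fun s (_ : s ∈ A) => hdDφ s ω)]
        rw [← Finset.mul_sum, Finset.sum_comm]
        rw [Finset.sum_sub_distrib, Finset.sum_const, Finset.card_univ, Fintype.card_fin,
          nsmul_eq_mul, ← hm]
        field_simp
      rw [hSig, show (1 / (N : ℝ)) * (∑ i, W i ω) = (∑ i, W i ω) / (N : ℝ) from by ring,
        le_div_iff₀ hNpos, show ε / 2 * (N : ℝ) = (N : ℝ) * (ε / 2) from by ring]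
    rw [hseteq] at htail
    -- convert toReal bound to ENNReal bound
    have hfin : μ {ω | ε / 2 ≤ ∑ s ∈ A, (d s - dD s ω)} ≠ ⊤ := measure_ne_top μ _
    apply (ENNReal.le_ofReal_iff_toReal_le hfin (exp_nonneg _)).mpr
    refine htail.trans (le_of_eq ?_)
    congr 1
    have hba : m - (m - c) = c := by ring
    rw [hba]
    have h2 : ((N : ℝ) * (ε / 2)) ^ 2 = (N : ℝ) ^ 2 * ε ^ 2 / 4 := by ring
    rw [h2, hεsq, hR]
    have hcne : c ≠ 0 := hcpos.ne'
    have hNne : (N : ℝ) ≠ 0 := hNpos.ne'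
    field_simp
  -- union bound
  set good : Set Ω := {ω | ∑ s : S, |d s - dD s ω| ≤ ε} with hgood
  have hsubset : goodᶜ ⊆ ⋃ A : Finset S, {ω | ε / 2 ≤ ∑ s ∈ A, (d s - dD s ω)} := by
    intro ω hω
    simp only [hgood, Set.mem_compl_iff, Set.mem_setOf_eq, not_le] at hω
    set A : Finset S := Finset.univ.filter (fun s => 0 ≤ d s - dD s ω) with hA
    refine Set.mem_iUnion.mpr ⟨A, ?_⟩
    simp only [Set.mem_setOf_eq]
    have hzero : ∑ s : S, (d s - dD s ω) = 0 := by
      rw [Finset.sum_sub_distrib, hdtotal, hdDtotal ω, sub_self]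
    have h2A : 2 * ∑ s ∈ A, (d s - dD s ω) =
        ∑ s : S, ((d s - dD s ω) + |d s - dD s ω|) := by
      rw [hA, Finset.sum_filter, Finset.mul_sum]
      apply Finset.sum_congr rfl
      intro s _
      by_cases h : 0 ≤ d s - dD s ω
      · rw [if_pos h, abs_of_nonneg h]; ring
      · rw [if_neg h, abs_of_neg (lt_of_not_ge h)]; ring
    have : 2 * ∑ s ∈ A, (d s - dD s ω) = ∑ s : S, |d s - dD s ω| := by
      rw [h2A, Finset.sum_add_distrib, hzero, zero_add]
    linarith
  have hbad : μ goodᶜ ≤ ENNReal.ofReal δ' := by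
    calc μ goodᶜ ≤ μ (⋃ A : Finset S, {ω | ε / 2 ≤ ∑ s ∈ A, (d s - dD s ω)}) :=
          measure_mono hsubset
      _ ≤ ∑' A : Finset S, μ {ω | ε / 2 ≤ ∑ s ∈ A, (d s - dD s ω)} := measure_iUnion_le _
      _ ≤ ∑' _A : Finset S, ENNReal.ofReal (Real.exp (-(3 * (K : ℝ) + 4 * L) / 4)) := by
          exact ENNReal.tsum_le_tsum fun A => hkey A
      _ = (2 ^ K : ℕ) * ENNReal.ofReal (Real.exp (-(3 * (K : ℝ) + 4 * L) / 4)) := by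
          rw [tsum_fintype, Finset.sum_const, Finset.card_univ, Fintype.card_finset,
            nsmul_eq_mul, hK]
      _ ≤ ENNReal.ofReal δ' := by
          rw [show ((2 ^ K : ℕ) : ℝ≥0∞) = ENNReal.ofReal ((2 : ℝ) ^ K) from by
            rw [ENNReal.ofReal_pow (by norm_num)]; norm_num]
          rw [← ENNReal.ofReal_mul (by positivity)]
          apply ENNReal.ofReal_le_ofReal
          -- real inequality: 2^K * exp(-(3K+4L)/4) ≤ δ'
          have hexpL : Real.exp (-L) = δ' := by
            rw [hL, Real.log_div one_ne_zero hδ0.ne', Real.log_one, zero_sub, neg_neg,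
              Real.exp_log hδ0]
          have hsplit : Real.exp (-(3 * (K : ℝ) + 4 * L) / 4) =
              Real.exp (-(3 / 4) * K) * Real.exp (-L) := by
            rw [← Real.exp_add]; congr 1; ring
          rw [hsplit, hexpL]
          have h2exp : (2 : ℝ) ≤ Real.exp (3 / 4) := by
            have h3 : (16 : ℝ) ≤ Real.exp 3 := by
              have he := Real.exp_one_gt_d9
              have h30 : Real.exp 3 = Real.exp 1 ^ 3 := by
                rw [← Real.exp_nat_mul]; norm_num
              calc (16 : ℝ) ≤ 2.7182818283 ^ 3 := by norm_num
                _ ≤ Real.exp 1 ^ 3 := pow_le_pow_left₀ (by norm_num) he.le 3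
                _ = Real.exp 3 := h30.symm
            have h4 : Real.exp (3 / 4) ^ 4 = Real.exp 3 := by
              rw [← Real.exp_nat_mul]; norm_num
            refine le_of_pow_le_pow_left₀ (by norm_num : (4 : ℕ) ≠ 0) (Real.exp_nonneg _) ?_
            rw [h4]
            calc (2 : ℝ) ^ 4 = 16 := by norm_num
              _ ≤ Real.exp 3 := h3
          have hpow : (2 : ℝ) ^ K * Real.exp (-(3 / 4) * K) ≤ 1 := by
            have h1 : (2 : ℝ) ^ K ≤ Real.exp (3 / 4) ^ K :=
              pow_le_pow_left₀ (by norm_num) h2exp K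
            have h2 : Real.exp (3 / 4) ^ K = Real.exp ((3 / 4) * K) := by
              rw [← Real.exp_nat_mul]; congr 1; ring
            have h5 : (2 : ℝ) ^ K * Real.exp (-(3 / 4) * K) ≤
                Real.exp ((3 / 4) * K) * Real.exp (-(3 / 4) * K) :=
              mul_le_mul_of_nonneg_right (h2 ▸ h1) (Real.exp_nonneg _)
            have h6 : Real.exp ((3 / 4) * K) * Real.exp (-(3 / 4) * K) = 1 := by
              rw [← Real.exp_add, show (3 / 4) * (K : ℝ) + -(3 / 4) * (K : ℝ) = 0 from by ring,
                Real.exp_zero]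
            linarith
          calc (2 : ℝ) ^ K * (Real.exp (-(3 / 4) * K) * δ') =
                ((2 : ℝ) ^ K * Real.exp (-(3 / 4) * K)) * δ' := by ring
            _ ≤ 1 * δ' := mul_le_mul_of_nonneg_right hpow hδ0.le
            _ = δ' := one_mul _
  -- conclude
  have huniv : (1 : ℝ≥0∞) ≤ μ good + μ goodᶜ := by
    have := measure_union_le (μ := μ) good goodᶜ
    rw [Set.union_compl_self, measure_univ] at this
    exact this
  have h1 : (1 : ℝ≥0∞) ≤ μ good + ENNReal.ofReal δ' :=
    huniv.trans (add_le_add le_rfl hbad)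
  have h2 : ENNReal.ofReal (1 - δ') = 1 - ENNReal.ofReal δ' := by
    rw [ENNReal.ofReal_sub 1 hδ0.le, ENNReal.ofReal_one]
  rw [h2]
  exact tsub_le_iff_right.mpr h1
end
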